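/- Let G be a connected finite simple graph with a vertex u, and let w₁, w₂ ∈ V(G) \ N[u] with N(w₂) \ {w₁} ⊆ N(u). If N(w₁) = {w₂} and d(u) ≥ d(w₂) + 1, then q(G − w₁w₂ + uw₁) > q(G). -/

import Mathlib

open scoped Classical

namespace OuterplanarQ

/-- Signless Laplacian matrix Q(G) = D(G) + A(G). -/
noncomputable def qMatrix {V : Type*} [Fintype V] (G : SimpleGraph V) : Matrix V V ℝ :=
  fun i j => (if i = j then (G.degree i : ℝ) else 0) + (if G.Adj i j then 1 else 0)

/-- The Q-index: the largest eigenvalue of Q(G). -/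
noncomputable def qIndex {V : Type*} [Fintype V] (G : SimpleGraph V) : ℝ :=
  sSup {μ : ℝ | ∃ x : V → ℝ, x ≠ 0 ∧ (qMatrix G).mulVec x = μ • x}

/-- Outerplanar: one-page book embedding characterization, i.e. the vertices admit a
linear ordering (injection into ℝ) such that no two edges interleave. -/
def IsOuterplanar {V : Type*} (G : SimpleGraph V) : Prop :=
  ∃ f : V → ℝ, Function.Injective f ∧
    ∀ a b c d : V, G.Adj a b → G.Adj c d →
      ¬ (f a < f c ∧ f c < f b ∧ f b < f d)

/-- `G` contains a copy of `F` as a subgraph. -/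
def ContainsCopy {α β : Type*} (G : SimpleGraph α) (F : SimpleGraph β) : Prop :=
  ∃ f : β → α, Function.Injective f ∧ ∀ a b : β, F.Adj a b → G.Adj (f a) (f b)

/-- Disjoint union of `t` copies of the path on `k` vertices. -/
def pathUnion (t k : ℕ) : SimpleGraph (Fin t × Fin k) where
  Adj a b := a.1 = b.1 ∧ (SimpleGraph.pathGraph k).Adj a.2 b.2
  symm := ⟨fun _ _ h => ⟨h.1.symm, h.2.symm⟩⟩
  loopless := ⟨fun _ h => (SimpleGraph.pathGraph k).irrefl h.2⟩

/-- Disjoint union of two graphs. -/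
def disjSum {α β : Type*} (G : SimpleGraph α) (H : SimpleGraph β) : SimpleGraph (α ⊕ β) where
  Adj a b := match a, b with
    | Sum.inl x, Sum.inl y => G.Adj x y
    | Sum.inr x, Sum.inr y => H.Adj x y
    | _, _ => False
  symm := ⟨by rintro (x|x) (y|y) h <;> simp_all <;> exact h.symm⟩
  loopless := ⟨by rintro (x|x) h <;> simp_all⟩

/-- The join `K₁ ∨ H` of a single vertex with `H`. -/
def cone {V : Type*} (H : SimpleGraph V) : SimpleGraph (Option V) where
  Adj a b := match a, b with
    | none, none => False
    | none, some _ => True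
    | some _, none => True
    | some x, some y => H.Adj x y
  symm := ⟨by rintro (_|x) (_|y) h <;> simp_all <;> exact h.symm⟩
  loopless := ⟨by rintro (_|x) h <;> simp_all⟩

/-- A disjoint union of paths: acyclic with maximum degree at most 2. -/
def IsLinearForest {V : Type*} [Fintype V] (G : SimpleGraph V) : Prop :=
  G.IsAcyclic ∧ ∀ v : V, G.degree v ≤ 2

/-- The closed neighbourhood `N[u]`. -/
def closedNbhd {V : Type*} (G : SimpleGraph V) (u : V) : Set V :=
  insert u (G.neighborSet u)

/-- The graph obtained from `G` by adding the edge `uv`. -/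
def addEdge {V : Type*} (G : SimpleGraph V) (u v : V) : SimpleGraph V :=
  G ⊔ SimpleGraph.fromEdgeSet {s(u, v)}

/-- The graph obtained from `G` by deleting the edge `uv`. -/
def delEdge {V : Type*} (G : SimpleGraph V) (u v : V) : SimpleGraph V :=
  G.deleteEdges {s(u, v)}

/-- η(u) = d(u) + (1/d(u)) · Σ_{v ∈ N(u)} d(v). -/
noncomputable def eta {V : Type*} [Fintype V] (G : SimpleGraph V) (u : V) : ℝ :=
  (G.degree u : ℝ) + (1 / (G.degree u : ℝ)) * ∑ v ∈ G.neighborFinset u, (G.degree v : ℝ)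

open Finset

section Helpers
variable {V : Type*} [Fintype V]

lemma qMatrix_nonneg (G : SimpleGraph V) (i j : V) : 0 ≤ qMatrix G i j := by
  unfold qMatrix; positivity

lemma qMatrix_symm (G : SimpleGraph V) (i j : V) : qMatrix G i j = qMatrix G j i := by
  unfold qMatrix
  by_cases h : i = j
  · subst h; rfl
  · simp [h, Ne.symm h, G.adj_comm i j]

lemma qMatrix_mulVec_apply (G : SimpleGraph V) (x : V → ℝ) (i : V) :
    (qMatrix G).mulVec x i = (G.degree i : ℝ) * x i + ∑ j ∈ G.neighborFinset i, x j := by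
  unfold qMatrix Matrix.mulVec
  simp only [dotProduct, add_mul]
  rw [Finset.sum_add_distrib]
  congr 1
  · simp only [ite_mul, zero_mul, Finset.sum_ite_eq, Finset.mem_univ, if_true]
  · rw [SimpleGraph.neighborFinset_eq_filter, Finset.sum_filter]
    exact Finset.sum_congr rfl (by intro j _; by_cases h : G.Adj i j <;> simp [h])


lemma exists_perron [Nonempty V] (H : SimpleGraph V) :
    ∃ x : V → ℝ, (∀ i, 0 ≤ x i) ∧ x ≠ 0 ∧
      (qMatrix H).mulVec x = (qIndex H) • x ∧
      ∀ y : V → ℝ, ∑ i, (qMatrix H).mulVec y i * y i ≤ qIndex H * ∑ i, y i * y i := by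
  classical
  set M := qMatrix H with hM
  let T : EuclideanSpace ℝ V →ₗ[ℝ] EuclideanSpace ℝ V :=
    { toFun := fun z => WithLp.toLp 2 (M.mulVec z)
      map_add' := fun a b => by ext i; simp [Matrix.mulVec_add]
      map_smul' := fun c a => by ext i; simp [Matrix.mulVec_smul] }
  let Tc : EuclideanSpace ℝ V →L[ℝ] EuclideanSpace ℝ V := LinearMap.toContinuousLinearMap T
  have hTc : ∀ z : EuclideanSpace ℝ V, Tc z = WithLp.toLp 2 (M.mulVec z) := fun z => rfl
  have hsym : (Tc : EuclideanSpace ℝ V →ₗ[ℝ] EuclideanSpace ℝ V).IsSymmetric := by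
    intro a b
    simp only [ContinuousLinearMap.coe_coe]
    simp [PiLp.inner_apply, RCLike.inner_apply, conj_trivial, hTc]
    simp only [Matrix.mulVec, dotProduct, Finset.sum_mul, Finset.mul_sum]
    rw [Finset.sum_comm]
    refine Finset.sum_congr rfl fun i _ => Finset.sum_congr rfl fun j _ => ?_
    rw [hM, qMatrix_symm]
    ring
  have hsa : IsSelfAdjoint Tc := ContinuousLinearMap.isSelfAdjoint_iff_isSymmetric.mpr hsym
  have hnt : Nontrivial (EuclideanSpace ℝ V) := inferInstance
  have hsphne : (Metric.sphere (0 : EuclideanSpace ℝ V) 1).Nonempty :=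
    NormedSpace.sphere_nonempty.mpr zero_le_one
  obtain ⟨x₁, hx₁s, hx₁max⟩ := (isCompact_sphere (0 : EuclideanSpace ℝ V) 1).exists_isMaxOn hsphne
    Tc.reApplyInnerSelf_continuous.continuousOn
  have freal : ∀ z : EuclideanSpace ℝ V, Tc.reApplyInnerSelf z = ∑ i, M.mulVec z i * z i := by
    intro z
    rw [ContinuousLinearMap.reApplyInnerSelf_apply]
    simp [PiLp.inner_apply, RCLike.inner_apply, conj_trivial, hTc]
    exact Finset.sum_congr rfl fun i _ => mul_comm _ _
  set x₀ : EuclideanSpace ℝ V := WithLp.toLp 2 (fun i => |x₁ i| : V → ℝ) with hx₀def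
  have hx₁n : ‖x₁‖ = 1 := by simpa using hx₁s
  have hnorm : ‖x₀‖ = 1 := by
    rw [← hx₁n]
    rw [EuclideanSpace.norm_eq, EuclideanSpace.norm_eq]
    congr 1
    exact Finset.sum_congr rfl fun i _ => by
      simp [Real.norm_eq_abs, abs_abs, hx₀def]
  have hx₀ne : x₀ ≠ 0 := by
    intro h; rw [h] at hnorm; simp at hnorm
  have hx₀s : x₀ ∈ Metric.sphere (0 : EuclideanSpace ℝ V) 1 := by
    simpa using hnorm
  have hmono : Tc.reApplyInnerSelf x₁ ≤ Tc.reApplyInnerSelf x₀ := by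
    rw [freal, freal]
    simp only [Matrix.mulVec, dotProduct, Finset.sum_mul]
    refine Finset.sum_le_sum fun i _ => Finset.sum_le_sum fun j _ => ?_
    have h1 : M i j * x₁ j * x₁ i ≤ |M i j * x₁ j * x₁ i| := le_abs_self _
    have h2 : |M i j * x₁ j * x₁ i| = M i j * |x₁ j| * |x₁ i| := by
      rw [abs_mul, abs_mul, abs_of_nonneg (hM ▸ qMatrix_nonneg H i j)]
    calc M i j * x₁ j * x₁ i ≤ M i j * |x₁ j| * |x₁ i| := h2 ▸ h1
      _ = M i j * x₀ j * x₀ i := rfl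
  have hmax₀ : IsMaxOn Tc.reApplyInnerSelf (Metric.sphere (0 : EuclideanSpace ℝ V) 1) x₀ := by
    intro y hy
    exact le_trans (hx₁max hy) hmono
  set q₀ : ℝ := Tc.reApplyInnerSelf x₀ with hq₀
  have heig : M.mulVec x₀ = q₀ • x₀ := by
    have hmax₀' : IsMaxOn Tc.reApplyInnerSelf (Metric.sphere (0 : EuclideanSpace ℝ V) ‖x₀‖) x₀ := by
      rw [hnorm]; exact hmax₀
    have := hsa.eq_smul_self_of_isLocalExtrOn (Or.inr hmax₀'.localize)
    rw [ContinuousLinearMap.rayleighQuotient, hnorm] at this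
    have h3 : Tc x₀ = q₀ • x₀ := by simpa using this
    have h2 := congrArg WithLp.ofLp h3
    rw [hTc] at h2
    simpa using h2
  have hray : ∀ y : V → ℝ, ∑ i, M.mulVec y i * y i ≤ q₀ * ∑ i, y i * y i := by
    intro y
    by_cases hy : y = 0
    · simp [hy, Matrix.mulVec_zero]
    · let yE : EuclideanSpace ℝ V := WithLp.toLp 2 y
      have hyE : yE ≠ 0 := fun h => hy (by simpa [yE] using congrArg WithLp.ofLp h)
      have hc0 : 0 < ‖yE‖ := norm_pos_iff.mpr hyE
      have hmem : (‖yE‖⁻¹ • yE) ∈ Metric.sphere (0 : EuclideanSpace ℝ V) 1 := by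
        rw [Metric.mem_sphere, dist_zero_right, norm_smul, norm_inv, norm_norm]
        field_simp
      have hle : Tc.reApplyInnerSelf (‖yE‖⁻¹ • yE) ≤ q₀ := hmax₀ hmem
      rw [freal] at hle
      have hexp : ∑ i, M.mulVec ((‖yE‖⁻¹ • yE : EuclideanSpace ℝ V)) i * (‖yE‖⁻¹ • yE) i
          = ‖yE‖⁻¹ ^ 2 * ∑ i, M.mulVec y i * y i := by
        rw [Finset.mul_sum]
        refine Finset.sum_congr rfl fun i _ => ?_
        have h1 : M.mulVec ((‖yE‖⁻¹ • yE : EuclideanSpace ℝ V)) i = ‖yE‖⁻¹ * M.mulVec y i := by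
          have : ((‖yE‖⁻¹ • yE : EuclideanSpace ℝ V) : V → ℝ) = ‖yE‖⁻¹ • y := rfl
          rw [this, Matrix.mulVec_smul]
          rfl
        have h2 : (‖yE‖⁻¹ • yE) i = ‖yE‖⁻¹ * y i := rfl
        rw [h1, h2]; ring
      rw [hexp] at hle
      have hcsq : ∑ i, y i * y i = ‖yE‖ ^ 2 := by
        have h := real_inner_self_eq_norm_sq yE
        rw [PiLp.inner_apply] at h
        simpa [RCLike.inner_apply, sq, yE] using h
      rw [hcsq]
      calc ∑ i, M.mulVec y i * y i
          = (‖yE‖ ^ 2) * (‖yE‖⁻¹ ^ 2 * ∑ i, M.mulVec y i * y i) := by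
            field_simp
        _ ≤ ‖yE‖ ^ 2 * q₀ := by
            apply mul_le_mul_of_nonneg_left hle (by positivity)
        _ = q₀ * ‖yE‖ ^ 2 := mul_comm _ _
  have hqi : qIndex H = q₀ := by
    apply IsGreatest.csSup_eq
    constructor
    · exact ⟨x₀, fun h => hx₀ne (by simpa using congrArg (WithLp.toLp 2) h), heig⟩
    · rintro μ ⟨z, hz0, hz⟩
      have hzz : 0 < ∑ i, z i * z i := by
        obtain ⟨i, hi⟩ := Function.ne_iff.mp hz0
        refine Finset.sum_pos' (fun j _ => mul_self_nonneg _) ⟨i, Finset.mem_univ i, ?_⟩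
        exact mul_self_pos.mpr hi
      have h1 : ∑ i, M.mulVec z i * z i = μ * ∑ i, z i * z i := by
        rw [hz, Finset.mul_sum]
        exact Finset.sum_congr rfl fun i _ => by
          show (μ • z) i * z i = μ * (z i * z i)
          simp [mul_assoc]
      have := hray z
      rw [h1] at this
      exact le_of_mul_le_mul_right this hzz
  refine ⟨x₀, fun i => abs_nonneg _, fun h => hx₀ne (by simpa using congrArg (WithLp.toLp 2) h), ?_, ?_⟩
  · rw [hqi]; exact heig
  · intro y; rw [hqi]; exact hray y

omit [Fintype V] in
lemma rotate_adj (G : SimpleGraph V) (u w₁ w₂ i j : V) :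
    (addEdge (delEdge G w₁ w₂) u w₁).Adj i j ↔
      (G.Adj i j ∧ ¬((i = w₁ ∧ j = w₂) ∨ (i = w₂ ∧ j = w₁))) ∨
        (((i = u ∧ j = w₁) ∨ (i = w₁ ∧ j = u)) ∧ i ≠ j) := by
  simp only [addEdge, delEdge, SimpleGraph.sup_adj, SimpleGraph.deleteEdges_adj,
    SimpleGraph.fromEdgeSet_adj, Set.mem_singleton_iff, Sym2.eq_iff]

end Helpers

set_option maxHeartbeats 1000000 in
/-- Lemma 2.7 of the paper: if `w₁, w₂ ∉ N[u]`, `N(w₂) \ {w₁} ⊆ N(u)`, `N(w₁) = {w₂}`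
and `d(u) ≥ d(w₂) + 1`, then `q(G - w₁w₂ + uw₁) > q(G)`. -/
theorem qIndex_lt_rotate_pendant_path
    {V : Type*} [Fintype V] (G : SimpleGraph V) (hconn : G.Connected)
    (u w₁ w₂ : V) (hw₁ : w₁ ∉ closedNbhd G u) (hw₂ : w₂ ∉ closedNbhd G u)
    (hsub : G.neighborSet w₂ \ {w₁} ⊆ G.neighborSet u)
    (hN : G.neighborSet w₁ = {w₂})
    (hdeg : G.degree w₂ + 1 ≤ G.degree u) :
    qIndex G < qIndex (addEdge (delEdge G w₁ w₂) u w₁) := by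
  classical
  have hne : Nonempty V := hconn.nonempty
  simp only [closedNbhd, Set.mem_insert_iff, SimpleGraph.mem_neighborSet] at hw₁ hw₂
  push_neg at hw₁ hw₂
  obtain ⟨hw₁u, hnadj_u1⟩ := hw₁
  obtain ⟨hw₂u, hnadj_u2⟩ := hw₂
  have hadj12 : G.Adj w₁ w₂ := by
    have : w₂ ∈ G.neighborSet w₁ := by rw [hN]; exact rfl
    exact this
  have h12 : w₁ ≠ w₂ := hadj12.ne
  have hu1 : u ≠ w₁ := fun h => hw₁u h.symm
  have hu2 : u ≠ w₂ := fun h => hw₂u h.symm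
  -- neighbor finsets of G
  have hNw₁ : G.neighborFinset w₁ = {w₂} := by
    ext a; simp [SimpleGraph.mem_neighborFinset, ← SimpleGraph.mem_neighborSet, hN]
  have hdeg1 : G.degree w₁ = 1 := by
    rw [← SimpleGraph.card_neighborFinset_eq_degree, hNw₁, Finset.card_singleton]
  have hw1mem2 : w₁ ∈ G.neighborFinset w₂ := by
    rw [SimpleGraph.mem_neighborFinset]; exact hadj12.symm
  have hd2pos : 1 ≤ G.degree w₂ := by
    rw [← SimpleGraph.card_neighborFinset_eq_degree]
    exact Finset.card_pos.mpr ⟨w₁, hw1mem2⟩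
  have hdu2 : 2 ≤ G.degree u := by omega
  set G' := addEdge (delEdge G w₁ w₂) u w₁ with hG'def
  -- neighbor finsets of G'
  have hN'u : G'.neighborFinset u = insert w₁ (G.neighborFinset u) := by
    ext a
    rw [SimpleGraph.mem_neighborFinset, hG'def, rotate_adj, Finset.mem_insert,
      SimpleGraph.mem_neighborFinset]
    constructor
    · rintro (⟨h, -⟩ | ⟨(⟨-, h⟩ | ⟨h, -⟩), -⟩)
      · exact Or.inr h
      · exact Or.inl h
      · exact absurd h hu1
    · rintro (rfl | h)
      · exact Or.inr ⟨Or.inl ⟨rfl, rfl⟩, hu1⟩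
      · exact Or.inl ⟨h, by rintro (⟨rfl, -⟩ | ⟨rfl, -⟩) <;> [exact hu1 rfl; exact hu2 rfl]⟩
  have hN'w₁ : G'.neighborFinset w₁ = {u} := by
    ext a
    rw [SimpleGraph.mem_neighborFinset, hG'def, rotate_adj, Finset.mem_singleton]
    constructor
    · rintro (⟨h, hne2⟩ | ⟨(⟨h, -⟩ | ⟨-, h⟩), -⟩)
      · exfalso
        have h' : a ∈ G.neighborSet w₁ := h
        rw [hN] at h'
        exact hne2 (Or.inl ⟨rfl, h'⟩)
      · exact absurd h.symm hu1
      · exact h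
    · rintro rfl
      exact Or.inr ⟨Or.inr ⟨rfl, rfl⟩, fun h => hu1 h.symm⟩
  have hN'w₂ : G'.neighborFinset w₂ = (G.neighborFinset w₂).erase w₁ := by
    ext a
    rw [SimpleGraph.mem_neighborFinset, hG'def, rotate_adj, Finset.mem_erase,
      SimpleGraph.mem_neighborFinset]
    constructor
    · rintro (⟨h, hne2⟩ | ⟨(⟨h, -⟩ | ⟨h, -⟩), -⟩)
      · exact ⟨fun hc => hne2 (Or.inr ⟨rfl, hc⟩), h⟩
      · exact absurd h hu2.symm
      · exact absurd h h12.symm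
    · rintro ⟨hne2, h⟩
      exact Or.inl ⟨h, by rintro (⟨rfl, -⟩ | ⟨-, rfl⟩) <;> [exact h12 rfl; exact hne2 rfl]⟩
  have hN'other : ∀ i, i ≠ u → i ≠ w₁ → i ≠ w₂ → G'.neighborFinset i = G.neighborFinset i := by
    intro i hiu hi1 hi2
    ext a
    rw [SimpleGraph.mem_neighborFinset, hG'def, rotate_adj, SimpleGraph.mem_neighborFinset]
    constructor
    · rintro (⟨h, -⟩ | ⟨(⟨h, -⟩ | ⟨h, -⟩), -⟩)
      · exact h
      · exact absurd h hiu
      · exact absurd h hi1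
    · intro h
      exact Or.inl ⟨h, by rintro (⟨rfl, -⟩ | ⟨rfl, -⟩) <;> [exact hi1 rfl; exact hi2 rfl]⟩
  have hw1notinNu : w₁ ∉ G.neighborFinset u := by
    rw [SimpleGraph.mem_neighborFinset]; exact hnadj_u1
  -- degrees of G'
  have hd'u : G'.degree u = G.degree u + 1 := by
    rw [← SimpleGraph.card_neighborFinset_eq_degree, hN'u,
      Finset.card_insert_of_notMem hw1notinNu, SimpleGraph.card_neighborFinset_eq_degree]
  have hd'w₁ : G'.degree w₁ = 1 := by
    rw [← SimpleGraph.card_neighborFinset_eq_degree, hN'w₁, Finset.card_singleton]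
  have hd'w₂ : G'.degree w₂ = G.degree w₂ - 1 := by
    rw [← SimpleGraph.card_neighborFinset_eq_degree, hN'w₂,
      Finset.card_erase_of_mem hw1mem2, SimpleGraph.card_neighborFinset_eq_degree]
  have hd'other : ∀ i, i ≠ u → i ≠ w₁ → i ≠ w₂ → G'.degree i = G.degree i := by
    intro i h1 h2 h3
    rw [← SimpleGraph.card_neighborFinset_eq_degree, hN'other i h1 h2 h3,
      SimpleGraph.card_neighborFinset_eq_degree]
  -- Perron vector of G
  obtain ⟨x, hxnn, hxne, hxeig, hxray⟩ := exists_perron G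
  set q := qIndex G with hq
  have hrow : ∀ i, (G.degree i : ℝ) * x i + ∑ j ∈ G.neighborFinset i, x j = q * x i := by
    intro i
    have h := congrFun hxeig i
    rw [qMatrix_mulVec_apply] at h
    simpa using h
  -- positivity
  have hzero : ∀ i, x i = 0 → ∀ j ∈ G.neighborFinset i, x j = 0 := by
    intro i hi j hj
    have h := hrow i
    rw [hi, mul_zero, mul_zero, zero_add] at h
    exact (Finset.sum_eq_zero_iff_of_nonneg (fun k _ => hxnn k)).mp h j hj
  have hkey : ∀ (i j : V) (p : G.Walk i j), x i = 0 → x j = 0 := by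
    intro i j p
    induction p with
    | nil => exact id
    | cons h p ih =>
        intro h0
        exact ih (hzero _ h0 _ ((SimpleGraph.mem_neighborFinset _ _ _).mpr h))
  have hpos : ∀ i, 0 < x i := by
    intro i
    rcases lt_or_eq_of_le (hxnn i) with h | h
    · exact h
    · exfalso
      apply hxne
      funext j
      obtain ⟨p⟩ := hconn.preconnected i j
      exact hkey i j p h.symm
  -- q ≥ d(u) + 1
  set d : ℝ := (G.degree u : ℝ) with hd
  have hdR : (2 : ℝ) ≤ d := by rw [hd]; exact_mod_cast hdu2
  have husu : u ∉ G.neighborFinset u := by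
    rw [SimpleGraph.mem_neighborFinset]; exact G.irrefl
  have hq_lb : d + 1 ≤ q := by
    set y : V → ℝ := fun i => if i = u then d else if i ∈ G.neighborFinset u then 1 else 0
      with hy
    have hynn : ∀ i, 0 ≤ y i := by
      intro i; rw [hy]; dsimp only
      split
      · linarith
      · split <;> norm_num
    have hyu : y u = d := by simp [hy]
    have hyv : ∀ v ∈ G.neighborFinset u, y v = 1 := by
      intro v hv
      have hvu : v ≠ u := by rintro rfl; exact husu hv
      have hadj : G.Adj u v := (SimpleGraph.mem_neighborFinset _ _ _).mp hv
      simp [hy, hvu, hadj]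
    have hyoff : ∀ i, i ∉ insert u (G.neighborFinset u) → y i = 0 := by
      intro i hi
      rw [Finset.mem_insert] at hi
      push_neg at hi
      have hnadj : ¬ G.Adj u i := fun h => hi.2 ((SimpleGraph.mem_neighborFinset _ _ _).mpr h)
      simp [hy, hi.1, hnadj]
    have hsumNu : ∑ j ∈ G.neighborFinset u, y j = d := by
      rw [Finset.sum_congr rfl hyv, Finset.sum_const, nsmul_eq_mul, mul_one, hd,
        SimpleGraph.card_neighborFinset_eq_degree]
    have hyy : ∑ i, y i * y i = d * d + d := by
      rw [← Finset.sum_subset (Finset.subset_univ (insert u (G.neighborFinset u)))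
        (fun i _ hi => by rw [hyoff i hi, mul_zero]),
        Finset.sum_insert husu, hyu]
      congr 1
      calc ∑ i ∈ G.neighborFinset u, y i * y i
          = ∑ i ∈ G.neighborFinset u, y i :=
            Finset.sum_congr rfl (fun i hi => by rw [hyv i hi, mul_one])
        _ = d := hsumNu
    have htermnn : ∀ i, 0 ≤ (qMatrix G).mulVec y i * y i := by
      intro i
      rw [qMatrix_mulVec_apply]
      have h1 : 0 ≤ (G.degree i : ℝ) * y i := mul_nonneg (Nat.cast_nonneg _) (hynn i)
      have h2 : (0:ℝ) ≤ ∑ j ∈ G.neighborFinset i, y j :=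
        Finset.sum_nonneg (fun j _ => hynn j)
      exact mul_nonneg (by linarith) (hynn i)
    have hlow : d * ((d + 1) * (d + 1)) ≤ ∑ i, (qMatrix G).mulVec y i * y i := by
      have hsub1 : ∑ i ∈ insert u (G.neighborFinset u), (qMatrix G).mulVec y i * y i
          ≤ ∑ i, (qMatrix G).mulVec y i * y i :=
        Finset.sum_le_sum_of_subset_of_nonneg (Finset.subset_univ _)
          (fun i _ _ => htermnn i)
      have hterm_u : (qMatrix G).mulVec y u * y u = (d * d + d) * d := by
        rw [qMatrix_mulVec_apply, hsumNu, hyu, ← hd]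
      have hterm_v : ∀ v ∈ G.neighborFinset u, (1 + d) ≤ (qMatrix G).mulVec y v * y v := by
        intro v hv
        rw [qMatrix_mulVec_apply, hyv v hv, mul_one, mul_one]
        have huv : u ∈ G.neighborFinset v := by
          rw [SimpleGraph.mem_neighborFinset]
          exact ((SimpleGraph.mem_neighborFinset _ _ _).mp hv).symm
        have h1 : (1:ℝ) ≤ (G.degree v : ℝ) := by
          have : 1 ≤ G.degree v := by
            rw [← SimpleGraph.card_neighborFinset_eq_degree]
            exact Finset.card_pos.mpr ⟨u, huv⟩
          exact_mod_cast this
        have h2 : d ≤ ∑ j ∈ G.neighborFinset v, y j := by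
          rw [← hyu]
          exact Finset.single_le_sum (fun j _ => hynn j) huv
        linarith
      have hsum_v : (G.neighborFinset u).card • (1 + d)
          ≤ ∑ v ∈ G.neighborFinset u, (qMatrix G).mulVec y v * y v :=
        Finset.card_nsmul_le_sum _ _ _ hterm_v
      have hcard : ((G.neighborFinset u).card : ℝ) = d := by
        rw [hd, SimpleGraph.card_neighborFinset_eq_degree]
      rw [Finset.sum_insert husu] at hsub1
      rw [nsmul_eq_mul, hcard] at hsum_v
      calc d * ((d + 1) * (d + 1)) = (d * d + d) * d + d * (1 + d) := by ring
        _ ≤ (qMatrix G).mulVec y u * y u + ∑ v ∈ G.neighborFinset u, (qMatrix G).mulVec y v * y v := by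
            rw [hterm_u]; linarith
        _ ≤ ∑ i, (qMatrix G).mulVec y i * y i := hsub1
    have hup := hxray y
    rw [hyy] at hup
    nlinarith [hlow, hup, hdR]
  -- eigen equations
  have h_u : d * x u + ∑ j ∈ G.neighborFinset u, x j = q * x u := hrow u
  have h_w₁ : x w₁ + x w₂ = q * x w₁ := by
    have h := hrow w₁
    rw [hdeg1, hNw₁, Finset.sum_singleton] at h
    simpa using h
  have h_w₂ : (G.degree w₂ : ℝ) * x w₂ + ∑ j ∈ G.neighborFinset w₂, x j = q * x w₂ := hrow w₂
  have hS2le : ∑ j ∈ G.neighborFinset w₂, x j ≤ x w₁ + ∑ j ∈ G.neighborFinset u, x j := by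
    have hsplit : x w₁ + ∑ j ∈ (G.neighborFinset w₂).erase w₁, x j
        = ∑ j ∈ G.neighborFinset w₂, x j := Finset.add_sum_erase _ _ hw1mem2
    have hsubF : (G.neighborFinset w₂).erase w₁ ⊆ G.neighborFinset u := by
      intro a ha
      rw [Finset.mem_erase, SimpleGraph.mem_neighborFinset] at ha
      rw [SimpleGraph.mem_neighborFinset]
      exact hsub ⟨ha.2, by simp [ha.1]⟩
    have := Finset.sum_le_sum_of_subset_of_nonneg hsubF (fun j _ _ => hxnn j)
    linarith
  set d₂ : ℝ := (G.degree w₂ : ℝ) with hd₂def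
  have hd₂le : d₂ + 1 ≤ d := by rw [hd, hd₂def]; exact_mod_cast hdeg
  -- x u > x w₂
  have hxw12 : 2 * x w₁ ≤ x w₂ := by nlinarith [hpos w₁, h_w₁, hq_lb, hdR]
  have hxu_gt : x w₂ < x u := by
    by_contra hcon
    push_neg at hcon
    have e1 : q * x w₂ - d₂ * x w₂ ≤ x w₁ + (q * x u - d * x u) := by
      rw [hd₂def]; linarith [h_u, h_w₂, hS2le]
    nlinarith [hpos w₂, hpos u, hpos w₁, mul_le_mul_of_nonneg_right hcon (by linarith : (0:ℝ) ≤ q - d),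
      mul_nonneg (by linarith : (0:ℝ) ≤ d - d₂ - 1) (hpos w₂).le]
  -- quadratic form difference
  have hc1 : (G'.degree u : ℝ) = d + 1 := by rw [hd'u, hd]; push_cast; ring
  have hc2 : (G'.degree w₁ : ℝ) = 1 := by rw [hd'w₁]; norm_num
  have hc3 : (G'.degree w₂ : ℝ) = d₂ - 1 := by
    rw [hd'w₂, Nat.cast_sub hd2pos, hd₂def]; norm_num
  have hdeg1R : (G.degree w₁ : ℝ) = 1 := by rw [hdeg1]; norm_num
  have herase : ∑ j ∈ (G.neighborFinset w₂).erase w₁, x j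
      = ∑ j ∈ G.neighborFinset w₂, x j - x w₁ := by
    have := Finset.add_sum_erase _ x hw1mem2
    linarith
  have hBu : (qMatrix G').mulVec x u * x u - (qMatrix G).mulVec x u * x u
      = x u * (x u + x w₁) := by
    rw [qMatrix_mulVec_apply, qMatrix_mulVec_apply, hN'u, Finset.sum_insert hw1notinNu, hc1, ← hd]
    ring
  have hBw₁ : (qMatrix G').mulVec x w₁ * x w₁ - (qMatrix G).mulVec x w₁ * x w₁
      = x w₁ * (x u - x w₂) := by
    rw [qMatrix_mulVec_apply, qMatrix_mulVec_apply, hN'w₁, hNw₁, Finset.sum_singleton,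
      Finset.sum_singleton, hc2, hdeg1R]
    ring
  have hBw₂ : (qMatrix G').mulVec x w₂ * x w₂ - (qMatrix G).mulVec x w₂ * x w₂
      = x w₂ * (-(x w₂) - x w₁) := by
    rw [qMatrix_mulVec_apply, qMatrix_mulVec_apply, hN'w₂, herase, hc3, ← hd₂def]
    ring
  have hBoff : ∀ i ∈ Finset.univ, i ∉ ({u, w₁, w₂} : Finset V) →
      (qMatrix G').mulVec x i * x i - (qMatrix G).mulVec x i * x i = 0 := by
    intro i _ hi
    simp only [Finset.mem_insert, Finset.mem_singleton] at hi
    push_neg at hi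
    rw [qMatrix_mulVec_apply, qMatrix_mulVec_apply, hN'other i hi.1 hi.2.1 hi.2.2,
      hd'other i hi.1 hi.2.1 hi.2.2, sub_self]
  have hdiffsum : ∑ i, ((qMatrix G').mulVec x i * x i - (qMatrix G).mulVec x i * x i)
      = x u * (x u + x w₁) + x w₁ * (x u - x w₂) + x w₂ * (-(x w₂) - x w₁) := by
    rw [← Finset.sum_subset (Finset.subset_univ ({u, w₁, w₂} : Finset V)) hBoff]
    rw [show ({u, w₁, w₂} : Finset V) = insert u (insert w₁ {w₂}) from rfl]
    rw [Finset.sum_insert (by simp [hu1, hu2]), Finset.sum_insert (by simp [h12]),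
      Finset.sum_singleton, hBu, hBw₁, hBw₂]
    ring
  have hA : ∑ i, (qMatrix G).mulVec x i * x i = q * ∑ i, x i * x i := by
    rw [hxeig, Finset.mul_sum]
    refine Finset.sum_congr rfl fun i _ => ?_
    show (q • x) i * x i = q * (x i * x i)
    simp [mul_assoc]
  have hxx : 0 < ∑ i, x i * x i :=
    Finset.sum_pos (fun i _ => mul_pos (hpos i) (hpos i)) Finset.univ_nonempty
  have hΔpos : 0 < x u * (x u + x w₁) + x w₁ * (x u - x w₂) + x w₂ * (-(x w₂) - x w₁) := by
    nlinarith [hxu_gt, hpos u, hpos w₁, hpos w₂]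
  have hsum_split : q * ∑ i, x i * x i < ∑ i, (qMatrix G').mulVec x i * x i := by
    have h := hdiffsum
    rw [Finset.sum_sub_distrib, hA] at h
    linarith
  obtain ⟨x', -, -, -, hray'⟩ := exists_perron G'
  have hfin := hray' x
  have : q * ∑ i, x i * x i < qIndex G' * ∑ i, x i * x i := lt_of_lt_of_le hsum_split hfin
  exact lt_of_mul_lt_mul_right this hxx.le


end OuterplanarQ
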